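/- Strong left invariance of the left integral: for all a, b ∈ A, S((id ⊗ φ)(Δ(a)(1 ⊗ b))) = (id ⊗ φ)((1 ⊗ a)Δ(b)); in Sweedler notation, S(Σ a₍₁₎ φ(a₍₂₎ b)) = Σ b₍₁₎ φ(a b₍₂₎). -/
import Mathlib


open TensorProduct HopfAlgebra

set_option synthInstance.maxHeartbeats 1000000 in
/-- Strong left invariance of the left integral: for all `a b ∈ A`,
`S((id ⊗ φ)(Δ(a)(1 ⊗ b))) = (id ⊗ φ)((1 ⊗ a)Δ(b))`. -/
theorem strong_left_invariance
    {A : Type*} [Ring A] [HopfAlgebra ℂ A]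
    (hS : Function.Bijective (antipode (R := ℂ) (A := A)))
    (φ : A →ₗ[ℂ] ℂ) (hφ0 : φ ≠ 0)
    (hφL : ∀ a : A,
      (TensorProduct.rid ℂ A) (LinearMap.lTensor A φ (Coalgebra.comul a)) = φ a • (1 : A)) :
    ∀ a b : A,
      antipode (R := ℂ)
          ((TensorProduct.rid ℂ A)
            (LinearMap.lTensor A φ (Coalgebra.comul (R := ℂ) a * (1 ⊗ₜ[ℂ] b)))) =
        (TensorProduct.rid ℂ A)
          (LinearMap.lTensor A φ ((1 ⊗ₜ[ℂ] a) * Coalgebra.comul (R := ℂ) b)) := by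
  intro a b
  classical
  -- ψ (x ⊗ y) = φ y • x
  set ψ : A ⊗[ℂ] A →ₗ[ℂ] A :=
    (TensorProduct.rid ℂ A).toLinearMap ∘ₗ LinearMap.lTensor A φ with hψdef
  have ψ_tmul : ∀ (x y : A), ψ (x ⊗ₜ[ℂ] y) = φ y • x := by
    intro x y; simp [hψdef]
  have hψmul : ∀ (c : A) (w : A ⊗[ℂ] A), ψ ((c ⊗ₜ[ℂ] (1 : A)) * w) = c * ψ w := by
    intro c w
    induction w using TensorProduct.induction_on with
    | zero => simp
    | tmul x y =>
        rw [Algebra.TensorProduct.tmul_mul_tmul, ψ_tmul, ψ_tmul, one_mul,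
          mul_smul_comm]
    | add x y hx hy => rw [mul_add, map_add, hx, hy, map_add, mul_add]
  -- the maps in the chase
  set H : A ⊗[ℂ] A →ₗ[ℂ] A :=
    ψ ∘ₗ LinearMap.mulRight ℂ (Coalgebra.comul (R := ℂ) b) with hHdef
  set P : A ⊗[ℂ] A →ₗ[ℂ] A :=
    ψ ∘ₗ LinearMap.mulRight ℂ ((1 : A) ⊗ₜ[ℂ] b) with hPdef
  set K : A ⊗[ℂ] (A ⊗[ℂ] A) →ₗ[ℂ] A :=
    LinearMap.mul' ℂ A ∘ₗ TensorProduct.map (antipode (R := ℂ)) H with hKdef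
  have key :
      H ∘ₗ LinearMap.rTensor A
          (LinearMap.mul' ℂ A ∘ₗ (antipode (R := ℂ) (A := A)).rTensor A ∘ₗ
            Coalgebra.comul) =
        K ∘ₗ (TensorProduct.assoc ℂ A A A).toLinearMap ∘ₗ
          LinearMap.rTensor A (Coalgebra.comul (R := ℂ)) := by
    apply TensorProduct.ext'
    intro u v
    simp only [LinearMap.comp_apply, LinearMap.rTensor_tmul, LinearEquiv.coe_coe]
    generalize Coalgebra.comul (R := ℂ) u = t
    induction t using TensorProduct.induction_on with
    | zero => simp only [map_zero, zero_tmul, LinearEquiv.map_zero]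
    | tmul p q =>
        rw [LinearMap.rTensor_tmul, LinearMap.mul'_apply, assoc_tmul]
        simp only [hKdef, hHdef, LinearMap.comp_apply, TensorProduct.map_tmul,
          LinearMap.mul'_apply, LinearMap.mulRight_apply]
        have : (antipode (R := ℂ) p * q) ⊗ₜ[ℂ] v =
            (antipode (R := ℂ) p ⊗ₜ[ℂ] (1 : A)) * (q ⊗ₜ[ℂ] v) := by
          rw [Algebra.TensorProduct.tmul_mul_tmul, one_mul]
        rw [this, mul_assoc, hψmul]
    | add x y hx hy =>
        simp only [map_add, add_tmul] at *
        rw [hx, hy]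
  have key2 :
      K ∘ₗ LinearMap.lTensor A (Coalgebra.comul (R := ℂ)) =
        (antipode (R := ℂ) (A := A)) ∘ₗ P := by
    apply TensorProduct.ext'
    intro u v
    simp only [LinearMap.comp_apply, LinearMap.lTensor_tmul]
    simp only [hKdef, LinearMap.comp_apply, TensorProduct.map_tmul, LinearMap.mul'_apply]
    have hH : H (Coalgebra.comul (R := ℂ) v) = φ (v * b) • (1 : A) := by
      rw [hHdef, LinearMap.comp_apply, LinearMap.mulRight_apply,
        ← Bialgebra.comul_mul]
      exact hφL (v * b)
    rw [hH, hPdef, LinearMap.comp_apply, LinearMap.mulRight_apply,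
      Algebra.TensorProduct.tmul_mul_tmul, mul_one, ψ_tmul, map_smul,
      mul_smul_comm, mul_one]
  have e1 : (1 : A) ⊗ₜ[ℂ] a =
      LinearMap.rTensor A (Algebra.linearMap ℂ A ∘ₗ Coalgebra.counit)
        (Coalgebra.comul (R := ℂ) a) := by
    rw [LinearMap.rTensor_comp, LinearMap.comp_apply, Coalgebra.rTensor_counit_comul,
      LinearMap.rTensor_tmul]
    simp
  calc
    antipode (R := ℂ)
        ((TensorProduct.rid ℂ A)
          (LinearMap.lTensor A φ (Coalgebra.comul (R := ℂ) a * (1 ⊗ₜ[ℂ] b))))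
        = ((antipode (R := ℂ) (A := A)) ∘ₗ P) (Coalgebra.comul (R := ℂ) a) := by
          simp [hPdef, hψdef]
    _ = (K ∘ₗ LinearMap.lTensor A (Coalgebra.comul (R := ℂ)))
          (Coalgebra.comul (R := ℂ) a) := by rw [key2]
    _ = K ((TensorProduct.assoc ℂ A A A)
          ((Coalgebra.comul (R := ℂ)).rTensor A (Coalgebra.comul (R := ℂ) a))) := by
          rw [LinearMap.comp_apply, Coalgebra.coassoc_apply]
    _ = (H ∘ₗ LinearMap.rTensor A
          (LinearMap.mul' ℂ A ∘ₗ (antipode (R := ℂ) (A := A)).rTensor A ∘ₗ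
            Coalgebra.comul)) (Coalgebra.comul (R := ℂ) a) := by
          rw [key]; rfl
    _ = H (LinearMap.rTensor A (Algebra.linearMap ℂ A ∘ₗ Coalgebra.counit)
          (Coalgebra.comul (R := ℂ) a)) := by
          rw [mul_antipode_rTensor_comul]; rfl
    _ = H ((1 : A) ⊗ₜ[ℂ] a) := by rw [← e1]
    _ = (TensorProduct.rid ℂ A)
          (LinearMap.lTensor A φ ((1 ⊗ₜ[ℂ] a) * Coalgebra.comul (R := ℂ) b)) := by
          simp [hHdef, hψdef]
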